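/- Let A = cl(U₂) \ U₁ be a generalized annulus (U₁, U₂ open bounded, 0 ∈ U₁ ⊆ cl(U₁) ⊆ U₂), and let F: Ψ⁻¹(A) → ℝ² be continuous and 2π-periodic in the first variable, with v ∉ F(Ψ⁻¹(∂U₂)) and v ∉ F(Ψ⁻¹(∂U₁)). Then deg(F ∘ Ψ⁻¹, int A, v) = 𝔇(F, U₂, v) − 𝔇(F, U₁, v). -/

import Mathlib

noncomputable section

open Set Metric Bornology

/-- Clockwise polar coordinates `Ψ(θ, r) = (r cos θ, -r sin θ)`. -/
def PsiP (p : ℝ × ℝ) : ℝ × ℝ := (p.2 * Real.cos p.1, -(p.2 * Real.sin p.1))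

/-- The set `Ψ⁻¹(E)` in the open half-plane (points with positive radius mapping into `E`). -/
def preE (E : Set (ℝ × ℝ)) : Set (ℝ × ℝ) := {p : ℝ × ℝ | 0 < p.2 ∧ PsiP p ∈ E}

/-- `F` is `2π`-periodic in the first variable, on `Ψ⁻¹(E)`. -/
def PerOn (F : ℝ × ℝ → ℝ × ℝ) (E : Set (ℝ × ℝ)) : Prop :=
  ∀ p : ℝ × ℝ, p ∈ preE E → F (p.1 + 2 * Real.pi, p.2) = F p

/-- The rotation set `rot(F, E) = {F^θ(y)/(2π) : y ∈ Ψ⁻¹(E)}`. -/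
def rotSet (F : ℝ × ℝ → ℝ × ℝ) (E : Set (ℝ × ℝ)) : Set ℝ :=
  {t : ℝ | ∃ p ∈ preE E, t = (F p).1 / (2 * Real.pi)}

/-- `Σ(F, E) = ℤ ∩ conv (rot(F, E))`. -/
def SigmaSet (F : ℝ × ℝ → ℝ × ℝ) (E : Set (ℝ × ℝ)) : Set ℤ :=
  {n : ℤ | (n : ℝ) ∈ convexHull ℝ (rotSet F E)}

/-- `ν_i = (2πi, 0)`. -/
def nu (i : ℤ) : ℝ × ℝ := (2 * Real.pi * i, 0)

/-- A Brouwer degree theory on the plane, characterized by the classical axioms: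
normalization, dependence only on boundary values, homotopy invariance, additivity,
and the solution property. -/
structure DegTheory where
  deg : (ℝ × ℝ → ℝ × ℝ) → Set (ℝ × ℝ) → ℝ × ℝ → ℤ
  deg_id : ∀ (U : Set (ℝ × ℝ)) (v : ℝ × ℝ), IsOpen U → IsBounded U → v ∈ U →
    deg id U v = 1
  deg_congr : ∀ (g₁ g₂ : ℝ × ℝ → ℝ × ℝ) (U : Set (ℝ × ℝ)) (v : ℝ × ℝ),
    IsOpen U → IsBounded U → ContinuousOn g₁ (closure U) → ContinuousOn g₂ (closure U) →
    (∀ x ∈ frontier U, g₁ x = g₂ x) → (∀ x ∈ frontier U, g₁ x ≠ v) →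
    deg g₁ U v = deg g₂ U v
  deg_homotopy : ∀ (H : (ℝ × ℝ) × ℝ → ℝ × ℝ) (U : Set (ℝ × ℝ)) (v : ℝ × ℝ),
    IsOpen U → IsBounded U →
    ContinuousOn H ((closure U) ×ˢ Icc (0:ℝ) 1) →
    (∀ x ∈ frontier U, ∀ t ∈ Icc (0:ℝ) 1, H (x, t) ≠ v) →
    deg (fun x => H (x, 0)) U v = deg (fun x => H (x, 1)) U v
  deg_additive : ∀ (g : ℝ × ℝ → ℝ × ℝ) (U U₁ U₂ : Set (ℝ × ℝ)) (v : ℝ × ℝ),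
    IsOpen U → IsOpen U₁ → IsOpen U₂ → IsBounded U →
    U₁ ⊆ U → U₂ ⊆ U → Disjoint U₁ U₂ → ContinuousOn g (closure U) →
    (∀ x ∈ closure U \ (U₁ ∪ U₂), g x ≠ v) →
    deg g U v = deg g U₁ v + deg g U₂ v
  deg_exists : ∀ (g : ℝ × ℝ → ℝ × ℝ) (U : Set (ℝ × ℝ)) (v : ℝ × ℝ),
    IsOpen U → IsBounded U → ContinuousOn g (closure U) →
    deg g U v ≠ 0 → ∃ x ∈ U, g x = v

/-- `g : ℝ² → ℝ²` represents `F_ext ∘ Ψ⁻¹` for an admissible extension `F_ext` of `F`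
(`F` being defined on `Ψ⁻¹(∂U)`): `g` is continuous on the plane and agrees with
`F ∘ Ψ⁻¹` on `∂U`.  (Via `F_ext = g ∘ Ψ`, this is equivalent to the existence of a
continuous extension `F_ext` of `F` to the closed half-plane which is `2π`-periodic in
the first variable and constant on the line `r = 0`.) -/
def IsDExt (F : ℝ × ℝ → ℝ × ℝ) (U : Set (ℝ × ℝ)) (g : ℝ × ℝ → ℝ × ℝ) : Prop :=
  Continuous g ∧ ∀ p : ℝ × ℝ, p ∈ preE (frontier U) → g (PsiP p) = F p

/-- Euclidean open ball of radius `ρ` about the origin of the plane. -/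
def ball2 (ρ : ℝ) : Set (ℝ × ℝ) := {x : ℝ × ℝ | x.1 ^ 2 + x.2 ^ 2 < ρ ^ 2}

/-- Euclidean circle of radius `ρ` about the origin of the plane. -/
def sphere2 (ρ : ℝ) : Set (ℝ × ℝ) := {x : ℝ × ℝ | x.1 ^ 2 + x.2 ^ 2 = ρ ^ 2}

/-- Euclidean norm on the plane. -/
def sqnorm (x : ℝ × ℝ) : ℝ := Real.sqrt (x.1 ^ 2 + x.2 ^ 2)

/-- `Φ` is the (unique) lift, through the clockwise polar coordinates `Ψ`, of the
evolution map `φ` on `[0,T] × Ψ⁻¹(S)`: it is continuous, starts from the identity,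
projects to `φ` via `Ψ`, stays in the open half-plane, and is equivariant under the
deck transformation `θ ↦ θ + 2π`. -/
def IsLiftOn (φ : ℝ → ℝ × ℝ → ℝ × ℝ) (Φ : ℝ → ℝ × ℝ → ℝ × ℝ) (T : ℝ)
    (S : Set (ℝ × ℝ)) : Prop :=
  ContinuousOn (fun q : ℝ × (ℝ × ℝ) => Φ q.1 q.2) (Icc 0 T ×ˢ preE S) ∧
  (∀ p ∈ preE S, Φ 0 p = p) ∧
  (∀ t ∈ Icc 0 T, ∀ p ∈ preE S,
    PsiP (Φ t p) = φ t (PsiP p) ∧ 0 < (Φ t p).2 ∧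
    Φ t (p.1 + 2 * Real.pi, p.2) = ((Φ t p).1 + 2 * Real.pi, (Φ t p).2))

/-- Surjectivity of clockwise polar coordinates onto nonzero points of the plane. -/
lemma psi_surj (x : ℝ × ℝ) (hx : x ≠ 0) : ∃ p : ℝ × ℝ, 0 < p.2 ∧ PsiP p = x := by
  set z : ℂ := ⟨x.1, x.2⟩ with hz
  have hz0 : z ≠ 0 := by
    intro h
    apply hx
    have h1 : z.re = 0 := by rw [h]; simp
    have h2 : z.im = 0 := by rw [h]; simp
    exact Prod.ext h1 h2
  have habs : (0:ℝ) < ‖z‖ := norm_pos_iff.mpr hz0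
  refine ⟨(-(Complex.arg z), ‖z‖), habs, ?_⟩
  have hcos : Real.cos (Complex.arg z) = z.re / ‖z‖ := Complex.cos_arg hz0
  have hsin : Real.sin (Complex.arg z) = z.im / ‖z‖ := Complex.sin_arg z
  have hre : z.re = x.1 := rfl
  have him : z.im = x.2 := rfl
  unfold PsiP
  simp only [Real.cos_neg, Real.sin_neg, hcos, hsin, hre, him]
  have hne : ‖z‖ ≠ 0 := ne_of_gt habs
  refine Prod.ext ?_ ?_
  · show ‖z‖ * (x.1 / ‖z‖) = x.1
    field_simp
  · show -(‖z‖ * -(x.2 / ‖z‖)) = x.2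
    field_simp

/-- for a generalized annulus `A = cl(U₂) \ U₁` and `F` continuous and
`2π`-periodic on `Ψ⁻¹(A)` avoiding `v` on `Ψ⁻¹(∂U₁)` and `Ψ⁻¹(∂U₂)`,
`deg(F ∘ Ψ⁻¹, int A, v) = 𝔇(F, U₂, v) - 𝔇(F, U₁, v)`.
Here `g` represents `F ∘ Ψ⁻¹` on `A` and `g₁, g₂` are admissible extensions. -/

theorem statement8 (D : DegTheory) (U₁ U₂ : Set (ℝ × ℝ)) (F : ℝ × ℝ → ℝ × ℝ)
    (v : ℝ × ℝ)
    (hU₁ : IsOpen U₁) (hU₂ : IsOpen U₂) (hU₂b : IsBounded U₂)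
    (h0 : (0 : ℝ × ℝ) ∈ U₁) (hsub : closure U₁ ⊆ U₂)
    (hFc : ContinuousOn F (preE (closure U₂ \ U₁)))
    (hFper : PerOn F (closure U₂ \ U₁))
    (hv₂ : ∀ p ∈ preE (frontier U₂), F p ≠ v)
    (hv₁ : ∀ p ∈ preE (frontier U₁), F p ≠ v)
    (g g₁ g₂ : ℝ × ℝ → ℝ × ℝ)
    (hgc : ContinuousOn g (closure (interior (closure U₂ \ U₁))))
    (hgF : ∀ p ∈ preE (closure U₂ \ U₁), g (PsiP p) = F p)
    (hg₁ : IsDExt F U₁ g₁) (hg₂ : IsDExt F U₂ g₂) :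
    D.deg g (interior (closure U₂ \ U₁)) v = D.deg g₂ U₂ v - D.deg g₁ U₁ v := by
  classical
  set A : Set (ℝ × ℝ) := closure U₂ \ U₁ with hAdef
  set W : Set (ℝ × ℝ) := interior A with hWdef
  set C₁ : Set (ℝ × ℝ) := closure U₁ with hC₁def
  set CW : Set (ℝ × ℝ) := closure W with hCWdef
  have hAclosed : IsClosed A := isClosed_closure.sdiff hU₁
  have hACU₂ : A ⊆ closure U₂ := diff_subset
  have hCW_A : CW ⊆ A := closure_minimal interior_subset hAclosed
  have hWC1 : W ⊆ C₁ᶜ := by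
    have h1 : A ⊆ U₁ᶜ := fun x hx => hx.2
    calc W ⊆ interior U₁ᶜ := interior_mono h1
    _ = C₁ᶜ := interior_compl
  have hsub' : U₁ ⊆ U₂ := fun x hx => hsub (subset_closure hx)
  have hUW : U₂ \ C₁ ⊆ W := by
    apply interior_maximal
    · rintro x ⟨h2, h1⟩
      exact ⟨subset_closure h2, fun h => h1 (subset_closure h)⟩
    · exact hU₂.sdiff isClosed_closure
  -- splitting of A \ W into the two frontiers
  have hsplit : ∀ x, x ∈ A → x ∉ W → (x ∈ C₁ \ U₁) ∨ (x ∉ C₁ ∧ x ∈ frontier U₂) := by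
    intro x hxA hxW
    by_cases hc : x ∈ C₁
    · exact Or.inl ⟨hc, hxA.2⟩
    · refine Or.inr ⟨hc, ?_⟩
      have hx2 : x ∉ U₂ := fun h => hxW (hUW ⟨h, hc⟩)
      rw [hU₂.frontier_eq]
      exact ⟨hxA.1, hx2⟩
  -- evaluation along polar coordinates
  have hpsi : ∀ x ∈ A, ∃ p : ℝ × ℝ, 0 < p.2 ∧ PsiP p = x := by
    intro x hx
    have hx0 : x ≠ 0 := fun h => hx.2 (by rw [h]; exact h0)
    exact psi_surj x hx0
  have hval1 : ∀ x ∈ C₁ \ U₁, g₁ x = g x ∧ g₁ x ≠ v := by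
    intro x hx
    have hxA : x ∈ A := ⟨subset_closure (hsub hx.1), hx.2⟩
    obtain ⟨p, hp0, hpx⟩ := hpsi x hxA
    have hpA : p ∈ preE A := ⟨hp0, by rw [hpx]; exact hxA⟩
    have hfr : x ∈ frontier U₁ := by rw [hU₁.frontier_eq]; exact hx
    have hp1 : p ∈ preE (frontier U₁) := ⟨hp0, by rw [hpx]; exact hfr⟩
    have e1 : g₁ x = F p := by rw [← hpx]; exact hg₁.2 p hp1
    have e2 : g x = F p := by rw [← hpx]; exact hgF p hpA
    exact ⟨by rw [e1, e2], by rw [e1]; exact hv₁ p hp1⟩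
  have hval2 : ∀ x ∈ frontier U₂, g₂ x = g x ∧ g₂ x ≠ v := by
    intro x hfr
    have hxA : x ∈ A := by
      rw [hU₂.frontier_eq] at hfr
      exact ⟨hfr.1, fun h => hfr.2 (hsub' h)⟩
    obtain ⟨p, hp0, hpx⟩ := hpsi x hxA
    have hpA : p ∈ preE A := ⟨hp0, by rw [hpx]; exact hxA⟩
    have hp2 : p ∈ preE (frontier U₂) := ⟨hp0, by rw [hpx]; exact hfr⟩
    have e1 : g₂ x = F p := by rw [← hpx]; exact hg₂.2 p hp2
    have e2 : g x = F p := by rw [← hpx]; exact hgF p hpA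
    exact ⟨by rw [e1, e2], by rw [e1]; exact hv₂ p hp2⟩
  -- the glued map
  set m : ℝ × ℝ → ℝ × ℝ := CW.piecewise g g₂ with hmdef
  set h : ℝ × ℝ → ℝ × ℝ := C₁.piecewise g₁ m with hhdef
  have hh_C₁ : ∀ x ∈ C₁, h x = g₁ x := fun x hx => Set.piecewise_eq_of_mem _ _ _ hx
  have hh_nC₁ : ∀ x ∉ C₁, h x = m x := fun x hx => Set.piecewise_eq_of_notMem _ _ _ hx
  have hm_CW : ∀ x ∈ CW, m x = g x := fun x hx => Set.piecewise_eq_of_mem _ _ _ hx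
  have hm_nCW : ∀ x ∉ CW, m x = g₂ x := fun x hx => Set.piecewise_eq_of_notMem _ _ _ hx
  -- continuity of h
  have hcont : Continuous h := by
    rw [continuous_iff_continuousAt]
    intro x
    by_cases hx2 : x ∈ U₂
    · -- inside U₂, h agrees with gluing of g₁ and g
      have hk : ContinuousOn (C₁.piecewise g₁ g) U₂ := by
        apply ContinuousOn.piecewise
        · intro a ha
          have ha1 : a ∈ C₁ \ U₁ := by
            have := frontier_closure_subset (s := U₁) ha.2
            rw [hU₁.frontier_eq] at this
            exact this
          exact (hval1 a ha1).1
        · exact hg₁.1.continuousOn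
        · apply hgc.mono
          intro y hy
          have h1 : y ∈ closure (U₂ ∩ C₁ᶜ) := hU₂.inter_closure hy
          exact closure_mono (fun z hz => hUW ⟨hz.1, hz.2⟩) h1
      have hkx : ContinuousAt (C₁.piecewise g₁ g) x := hk.continuousAt (hU₂.mem_nhds hx2)
      apply hkx.congr
      apply Filter.eventuallyEq_of_mem (hU₂.mem_nhds hx2)
      intro y hy
      by_cases hyc : y ∈ C₁
      · rw [Set.piecewise_eq_of_mem _ _ _ hyc, hh_C₁ y hyc]
      · have hyW : y ∈ CW := subset_closure (hUW ⟨hy, hyc⟩)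
        rw [Set.piecewise_eq_of_notMem _ _ _ hyc, hh_nC₁ y hyc, hm_CW y hyW]
    · -- outside closure U₁, h agrees with gluing of g and g₂
      have hx1 : x ∉ C₁ := fun hc => hx2 (hsub hc)
      have hopen : IsOpen C₁ᶜ := isClosed_closure.isOpen_compl
      have hm : ContinuousOn m C₁ᶜ := by
        apply ContinuousOn.piecewise
        · intro a ha
          have haCW : a ∈ CW := by
            have := frontier_subset_closure (s := CW) ha.2
            rwa [closure_closure] at this
          have haW : a ∉ W := by
            intro haw
            have : a ∈ interior CW := interior_maximal subset_closure isOpen_interior haw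
            exact ha.2.2 this
          rcases hsplit a (hCW_A haCW) haW with h1 | ⟨_, hfr2⟩
          · exact absurd h1.1 ha.1
          · exact (hval2 a hfr2).1.symm
        · apply hgc.mono
          intro y hy
          rw [closure_closure] at hy
          exact hy.2
        · exact hg₂.1.continuousOn
      have hmx : ContinuousAt m x := hm.continuousAt (hopen.mem_nhds hx1)
      apply hmx.congr
      apply Filter.eventuallyEq_of_mem (hopen.mem_nhds hx1)
      intro y hy
      exact (hh_nC₁ y hy).symm
  -- values of h off U₁ ∪ W within closure U₂
  have hhne : ∀ x, x ∈ A → x ∉ W → h x ≠ v := by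
    intro x hxA hxW
    rcases hsplit x hxA hxW with h1 | ⟨hc, hfr2⟩
    · rw [hh_C₁ x h1.1]; exact (hval1 x h1).2
    · rw [hh_nC₁ x hc]
      by_cases hcw : x ∈ CW
      · rw [hm_CW x hcw, ← (hval2 x hfr2).1]; exact (hval2 x hfr2).2
      · rw [hm_nCW x hcw]; exact (hval2 x hfr2).2
  -- boundedness
  have hbddc : IsBounded (closure U₂) := hU₂b.closure
  have hWb : IsBounded W := hbddc.subset (fun x hx => hACU₂ (interior_subset hx))
  have hWopen : IsOpen W := isOpen_interior
  set Ω : Set (ℝ × ℝ) := interior (closure U₂) with hΩdef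
  have hΩopen : IsOpen Ω := isOpen_interior
  have hΩb : IsBounded Ω := hbddc.subset interior_subset
  have hclΩ : closure Ω ⊆ closure U₂ := closure_minimal interior_subset isClosed_closure
  have hU₂Ω : U₂ ⊆ Ω := interior_maximal subset_closure hU₂
  have hWΩ : W ⊆ Ω := interior_mono hACU₂
  -- frontier facts
  have hfrW : frontier W ⊆ CW := frontier_subset_closure
  have hfrWn : ∀ x ∈ frontier W, x ∉ W := by
    intro x hx
    rw [hWopen.frontier_eq] at hx
    exact hx.2
  -- d1 : deg g W = deg h W
  have d1 : D.deg g W v = D.deg h W v := by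
    apply D.deg_congr g h W v hWopen hWb hgc hcont.continuousOn
    · intro x hx
      have hxCW : x ∈ CW := hfrW hx
      have hxA : x ∈ A := hCW_A hxCW
      have hxW : x ∉ W := hfrWn x hx
      rcases hsplit x hxA hxW with h1 | ⟨hc, _⟩
      · rw [hh_C₁ x h1.1]; exact (hval1 x h1).1.symm
      · rw [hh_nC₁ x hc, hm_CW x hxCW]
    · intro x hx
      have hxCW : x ∈ CW := hfrW hx
      have hxA : x ∈ A := hCW_A hxCW
      have hxW : x ∉ W := hfrWn x hx
      rcases hsplit x hxA hxW with h1 | ⟨_, hfr2⟩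
      · rw [← (hval1 x h1).1]; exact (hval1 x h1).2
      · rw [← (hval2 x hfr2).1]; exact (hval2 x hfr2).2
  -- d2 : deg h U₁ = deg g₁ U₁
  have hU₁b : IsBounded U₁ := hU₂b.subset hsub'
  have d2 : D.deg h U₁ v = D.deg g₁ U₁ v := by
    apply D.deg_congr h g₁ U₁ v hU₁ hU₁b hcont.continuousOn hg₁.1.continuousOn
    · intro x hx
      exact hh_C₁ x (frontier_subset_closure hx)
    · intro x hx
      rw [hU₁.frontier_eq] at hx
      rw [hh_C₁ x hx.1]
      exact (hval1 x hx).2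
  -- frontier U₂ : h = g₂ there
  have hhfr2 : ∀ x ∈ frontier U₂, h x = g₂ x ∧ h x ≠ v := by
    intro x hx
    have hx2 : x ∉ U₂ := by
      have hx' := hx
      rw [hU₂.frontier_eq] at hx'
      exact hx'.2
    have hc : x ∉ C₁ := fun h' => hx2 (hsub h')
    have e : h x = g₂ x := by
      rw [hh_nC₁ x hc]
      by_cases hcw : x ∈ CW
      · rw [hm_CW x hcw, (hval2 x hx).1]
      · exact hm_nCW x hcw
    exact ⟨e, by rw [e]; exact (hval2 x hx).2⟩
  -- d3 : deg h U₂ = deg g₂ U₂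
  have d3 : D.deg h U₂ v = D.deg g₂ U₂ v := by
    apply D.deg_congr h g₂ U₂ v hU₂ hU₂b hcont.continuousOn hg₂.1.continuousOn
    · exact fun x hx => (hhfr2 x hx).1
    · exact fun x hx => (hhfr2 x hx).2
  -- d4 : deg h ∅ = 0
  have d4 : D.deg h (∅ : Set (ℝ × ℝ)) v = 0 := by
    have := D.deg_additive h ∅ ∅ ∅ v isOpen_empty isOpen_empty isOpen_empty isBounded_empty
      (subset_refl _) (subset_refl _) (disjoint_bot_left) (by rw [closure_empty]; exact continuousOn_empty h)
      (by intro x hx; rw [closure_empty] at hx; exact absurd hx.1 (notMem_empty x))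
    omega
  -- d5 : deg h Ω = deg h U₂ + deg h ∅
  have d5 : D.deg h Ω v = D.deg h U₂ v + D.deg h (∅ : Set (ℝ × ℝ)) v := by
    apply D.deg_additive h Ω U₂ ∅ v hΩopen hU₂ isOpen_empty hΩb hU₂Ω (empty_subset _)
      (disjoint_bot_right) hcont.continuousOn
    intro x hx
    have hx2 : x ∉ U₂ := fun h' => hx.2 (Or.inl h')
    have hfr2 : x ∈ frontier U₂ := by
      rw [hU₂.frontier_eq]; exact ⟨hclΩ hx.1, hx2⟩
    exact (hhfr2 x hfr2).2
  -- d6 : deg h Ω = deg h U₁ + deg h W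
  have d6 : D.deg h Ω v = D.deg h U₁ v + D.deg h W v := by
    apply D.deg_additive h Ω U₁ W v hΩopen hU₁ hWopen hΩb (fun x hx => hU₂Ω (hsub' hx)) hWΩ
      (Set.disjoint_left.2 fun x hx hxW => hWC1 hxW (subset_closure hx)) hcont.continuousOn
    intro x hx
    have hx1 : x ∉ U₁ := fun h' => hx.2 (Or.inl h')
    have hxW : x ∉ W := fun h' => hx.2 (Or.inr h')
    exact hhne x ⟨hclΩ hx.1, hx1⟩ hxW
  omega
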